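/- Let μ be a probability measure on (E,𝓔), where E is a measurable abelian group with measurable negation, let κ(x,v) = (x,−v) on E², and let Φ : E² → E² be a (μ⊗μ,κ)-reversible transform. Then the proposal kernel Q(x,A) = μ({w ∈ E : Φ(x,w) ∈ A×E}) is a μ-reversible Markov kernel on (E,𝓔); in particular, the augmented Metropolis kernel built from Q with acceptance probability α(x,y) = min{1, exp(−U(y)+U(x))} is Π-reversible for Π(dx) = exp(−U(x))μ(dx). -/

import Mathlib

open MeasureTheory
open scoped ENNReal

/-- A transform `Φ` is `μ`-reversible if `μ(A ∩ Φ⁻¹(B)) = μ(B ∩ Φ⁻¹(A))` for all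
measurable `A`, `B`. -/
def MeasRev {E : Type*} [MeasurableSpace E] (μ : Measure E) (Φ : E → E) : Prop :=
  ∀ A B : Set E, MeasurableSet A → MeasurableSet B → μ (A ∩ Φ ⁻¹' B) = μ (B ∩ Φ ⁻¹' A)

/-- A transform `Φ` is `(μ,κ)`-reversible if `κ ∘ Φ` is `μ`-reversible. -/
def FlipRev {E : Type*} [MeasurableSpace E] (μ : Measure E) (κ Φ : E → E) : Prop :=
  MeasRev μ (κ ∘ Φ)

set_option maxHeartbeats 1000000 in
/-- The proposal kernel `Q(x,A) = μ({w : Φ(x,w) ∈ A×E})` of the augmented Metropolis kernel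
is `μ`-reversible, and the resulting augmented Metropolis kernel is `Π`-reversible. -/
theorem stmt_7 {E : Type*} [MeasurableSpace E] [AddCommGroup E] [MeasurableNeg E]
    (μ : Measure E) [IsProbabilityMeasure μ]
    (Φ : E × E → E × E) (hΦ_meas : Measurable Φ) (hΦ_bij : Function.Bijective Φ)
    (hΦ : FlipRev (μ.prod μ) (fun z : E × E => (z.1, -z.2)) Φ)
    (U : E → ℝ) (hU_meas : Measurable U)
    (Ppi : Measure E)
    (hPpi : Ppi = μ.withDensity fun x => ENNReal.ofReal (Real.exp (-U x)))
    [IsProbabilityMeasure Ppi] :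
    -- the proposal kernel, as the law of `p_X(Φ(x,·))` under `μ`
    let Q : E → Measure E := fun x => μ.map fun w => (Φ (x, w)).1
    -- the acceptance probability
    let α : E → E → ℝ≥0∞ := fun x y => ENNReal.ofReal (min 1 (Real.exp (-U y + U x)))
    -- the augmented Metropolis kernel
    let P : E → Set E → ℝ≥0∞ := fun x A =>
      A.indicator (fun _ => (1:ℝ≥0∞)) x * (1 - ∫⁻ y, α x y ∂(Q x))
        + ∫⁻ y in A, α x y ∂(Q x)
    -- `Q` is a `μ`-reversible Markov kernel
    ((∀ x : E, Q x Set.univ = 1) ∧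
      ∀ A B : Set E, MeasurableSet A → MeasurableSet B →
        ∫⁻ x in A, Q x B ∂μ = ∫⁻ x in B, Q x A ∂μ) ∧
    -- and the augmented Metropolis kernel is `Π`-reversible
    (∀ A B : Set E, MeasurableSet A → MeasurableSet B →
        ∫⁻ x in A, P x B ∂Ppi = ∫⁻ x in B, P x A ∂Ppi) := by
  intro Q α P
  have hQdef : Q = fun x => μ.map fun w => (Φ (x, w)).1 := rfl
  have hαdef : α = fun x y => ENNReal.ofReal (min 1 (Real.exp (-U y + U x))) := rfl
  have hPdef : P = fun x A =>
      A.indicator (fun _ => (1:ℝ≥0∞)) x * (1 - ∫⁻ y, α x y ∂(Q x))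
        + ∫⁻ y in A, α x y ∂(Q x) := rfl
  -- basic measurability facts
  have hF : Measurable fun z : E × E => (z.1, (Φ z).1) :=
    measurable_fst.prodMk hΦ_meas.fst
  have hφx : ∀ x : E, Measurable fun w => (Φ (x, w)).1 := fun x =>
    (hΦ_meas.comp (measurable_const.prodMk measurable_id)).fst
  have hα : Measurable fun p : E × E => α p.1 p.2 := by
    rw [hαdef]
    exact ENNReal.measurable_ofReal.comp <| measurable_const.min <|
      Real.measurable_exp.comp <| ((hU_meas.comp measurable_snd).neg.add
        (hU_meas.comp measurable_fst))
  clear_value Q α P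
  set ν : Measure (E × E) := (μ.prod μ).map (fun z : E × E => (z.1, (Φ z).1)) with hν
  haveI : IsProbabilityMeasure ν := hν ▸ Measure.isProbabilityMeasure_map hF.aemeasurable
  clear_value ν
  -- Q is probability
  have hQuniv : ∀ x : E, Q x Set.univ = 1 := by
    intro x
    rw [hQdef]
    simp [Measure.map_apply (hφx x) MeasurableSet.univ]
  have hQapp : ∀ (x : E) (B : Set E), MeasurableSet B →
      Q x B = μ {w | (Φ (x, w)).1 ∈ B} := by
    intro x B hB
    rw [hQdef]
    rw [Measure.map_apply (hφx x) hB]; rfl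
  -- ν on rectangles
  have hC : ∀ A B : Set E, MeasurableSet A → MeasurableSet B →
      ν (A ×ˢ B) = ∫⁻ x in A, Q x B ∂μ := by
    intro A B hA hB
    rw [hν, Measure.map_apply hF (hA.prod hB),
      Measure.prod_apply (hF (hA.prod hB)), ← lintegral_indicator hA]
    refine lintegral_congr fun x => ?_
    by_cases hx : x ∈ A
    · have h1 : Prod.mk x ⁻¹' ((fun z : E × E => (z.1, (Φ z).1)) ⁻¹' A ×ˢ B)
          = {w | (Φ (x, w)).1 ∈ B} := by
        ext w; simp [hx]
      rw [h1, Set.indicator_of_mem hx, hQapp x B hB]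
    · have h1 : Prod.mk x ⁻¹' ((fun z : E × E => (z.1, (Φ z).1)) ⁻¹' A ×ˢ B)
          = (∅ : Set E) := by
        ext w; simp [hx]
      rw [h1, Set.indicator_of_notMem hx]
      simp
  -- rectangle symmetry of ν from FlipRev
  have hD : ∀ A B : Set E, MeasurableSet A → MeasurableSet B →
      ν (A ×ˢ B) = ν (B ×ˢ A) := by
    intro A B hA hB
    have key := hΦ (A ×ˢ Set.univ) (B ×ˢ Set.univ)
      (hA.prod MeasurableSet.univ) (hB.prod MeasurableSet.univ)
    have hpre : ∀ S : Set E,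
        ((fun z : E × E => (z.1, -z.2)) ∘ Φ) ⁻¹' (S ×ˢ Set.univ)
          = Φ ⁻¹' (S ×ˢ Set.univ) := by
      intro S; ext z; simp
    have hset : ∀ S T : Set E,
        (S ×ˢ (Set.univ : Set E)) ∩ Φ ⁻¹' (T ×ˢ Set.univ)
          = (fun z : E × E => (z.1, (Φ z).1)) ⁻¹' (S ×ˢ T) := by
      intro S T; ext z; simp [Set.mem_prod]
    rw [hpre, hpre, hset, hset] at key
    rw [hν, Measure.map_apply hF (hA.prod hB), Measure.map_apply hF (hB.prod hA)]
    exact key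
  -- ν is swap-invariant
  have hE : ν.map Prod.swap = ν := by
    refine ext_of_generate_finite _ generateFrom_prod.symm isPiSystem_prod ?_ ?_
    · rintro s ⟨A, hA, B, hB, rfl⟩
      rw [Measure.map_apply measurable_swap ((hA : MeasurableSet A).prod hB),
        Set.preimage_swap_prod]
      exact (hD B A hB hA)
    · rw [Measure.map_apply measurable_swap MeasurableSet.univ]
      simp
  -- Q reversibility
  have hQrev : ∀ A B : Set E, MeasurableSet A → MeasurableSet B →
      ∫⁻ x in A, Q x B ∂μ = ∫⁻ x in B, Q x A ∂μ := by
    intro A B hA hB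
    rw [← hC A B hA hB, hD A B hA hB, hC B A hB hA]
  -- integration against Q
  have hQint : ∀ g : E × E → ℝ≥0∞, Measurable g → ∀ x : E,
      ∫⁻ y, g (x, y) ∂(Q x) = ∫⁻ w, g (x, (Φ (x, w)).1) ∂μ := by
    intro g hg x
    rw [hQdef]
    exact lintegral_map (hg.comp (measurable_const.prodMk measurable_id)) (hφx x)
  have hQmeas : ∀ g : E × E → ℝ≥0∞, Measurable g →
      Measurable fun x => ∫⁻ y, g (x, y) ∂(Q x) := by
    intro g hg
    simp only [hQint g hg]
    exact (hg.comp hF).lintegral_prod_right'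
  have hFub : ∀ g : E × E → ℝ≥0∞, Measurable g →
      ∫⁻ x, ∫⁻ y, g (x, y) ∂(Q x) ∂μ = ∫⁻ z, g z ∂ν := by
    intro g hg
    rw [hν, lintegral_map hg hF]
    refine Eq.trans (lintegral_congr fun x => hQint g hg x) ?_
    exact (lintegral_prod _ (hg.comp hF).aemeasurable).symm
  refine ⟨⟨hQuniv, hQrev⟩, ?_⟩
  -- Metropolis reversibility
  intro A B hA hB
  set e : E → ℝ≥0∞ := fun x => ENNReal.ofReal (Real.exp (-U x)) with he
  have he_meas : Measurable e :=
    ENNReal.measurable_ofReal.comp (Real.measurable_exp.comp hU_meas.neg)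
  set f : E × E → ℝ≥0∞ :=
    fun p => ENNReal.ofReal (min (Real.exp (-U p.1)) (Real.exp (-U p.2))) with hf
  have hf_symm : ∀ p : E × E, f (p.2, p.1) = f p := by
    intro p; simp [hf, min_comm]
  have hf_meas : Measurable f := by
    rw [hf]
    exact ENNReal.measurable_ofReal.comp
      (((Real.measurable_exp.comp hU_meas.neg).comp measurable_fst).min
        ((Real.measurable_exp.comp hU_meas.neg).comp measurable_snd))
  have hkey : ∀ x y : E, e x * α x y = f (x, y) := by
    intro x y
    rw [he, hαdef, hf]
    simp only
    rw [← ENNReal.ofReal_mul (Real.exp_pos _).le]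
    congr 1
    rw [mul_min_of_nonneg _ _ (Real.exp_pos (-U x)).le, mul_one, ← Real.exp_add]
    congr 2
    ring
  clear_value e f
  have hr_meas : Measurable fun x => ∫⁻ y, α x y ∂(Q x) := hQmeas _ hα
  -- rewriting a set-lintegral against Q via an indicator
  have hind : ∀ (T : Set E), MeasurableSet T → ∀ x : E,
      ∫⁻ y in T, α x y ∂(Q x)
        = ∫⁻ y, α x y * T.indicator (fun _ => (1:ℝ≥0∞)) y ∂(Q x) := by
    intro T hT x
    rw [← lintegral_indicator hT]
    refine lintegral_congr fun y => ?_
    by_cases hy : y ∈ T <;> simp [hy]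
  have hgmeas : ∀ (T : Set E), MeasurableSet T →
      Measurable fun p : E × E => α p.1 p.2 * T.indicator (fun _ => (1:ℝ≥0∞)) p.2 :=
    fun T hT => hα.mul ((measurable_const.indicator hT).comp measurable_snd)
  have hGm : ∀ (S T : Set E), MeasurableSet S → MeasurableSet T →
      Measurable ((S ×ˢ T).indicator f) :=
    fun S T hS hT => hf_meas.indicator (hS.prod hT)
  -- the second term of the Metropolis kernel, as a ν-integral
  have hTterm : ∀ (S T : Set E), MeasurableSet S → MeasurableSet T →
      ∫⁻ x in S, ∫⁻ y in T, α x y ∂(Q x) ∂Ppi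
        = ∫⁻ z, (S ×ˢ T).indicator f z ∂ν := by
    intro S T hS hT
    have hgT := hgmeas T hT
    have hmeas_h : Measurable fun x =>
        ∫⁻ y, α x y * T.indicator (fun _ => (1:ℝ≥0∞)) y ∂(Q x) := hQmeas _ hgT
    simp_rw [hind T hT]
    rw [hPpi, restrict_withDensity hS,
      lintegral_withDensity_eq_lintegral_mul _ he_meas hmeas_h,
      ← lintegral_indicator hS, ← hFub _ (hGm S T hS hT)]
    refine lintegral_congr fun x => ?_
    by_cases hx : x ∈ S
    · rw [Set.indicator_of_mem hx, Pi.mul_apply,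
        ← lintegral_const_mul (e x) (show Measurable fun y =>
          α x y * T.indicator (fun _ => (1:ℝ≥0∞)) y from
          hgT.comp (measurable_const.prodMk measurable_id))]
      refine lintegral_congr fun y => ?_
      by_cases hy : y ∈ T
      · rw [Set.indicator_of_mem hy, mul_one, hkey x y,
          Set.indicator_of_mem (Set.mem_prod.mpr ⟨hx, hy⟩)]
      · rw [Set.indicator_of_notMem hy, mul_zero, mul_zero,
          Set.indicator_of_notMem (fun h => hy (Set.mem_prod.mp h).2)]
    · rw [Set.indicator_of_notMem hx]
      refine ((lintegral_congr fun y => ?_).trans lintegral_zero).symm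
      simp [Set.indicator_apply, hx]
  -- swap-symmetry of that ν-integral
  have hTsymm : ∫⁻ z, (A ×ˢ B).indicator f z ∂ν = ∫⁻ z, (B ×ˢ A).indicator f z ∂ν := by
    conv_lhs => rw [← hE]
    rw [lintegral_map (hGm A B hA hB) measurable_swap]
    refine lintegral_congr fun z => ?_
    rcases z with ⟨x, y⟩
    simp only [Prod.swap, Set.indicator_apply, Set.mem_prod]
    by_cases h : x ∈ B ∧ y ∈ A
    · simp [h.1, h.2, hf_symm (x, y)]
    · rw [not_and_or] at h
      rcases h with h | h <;> simp [h]
  -- the diagonal (rejection) term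
  have hD1 : ∀ (S T : Set E), MeasurableSet S → MeasurableSet T →
      ∫⁻ x in S, T.indicator (fun _ => (1:ℝ≥0∞)) x * (1 - ∫⁻ y, α x y ∂(Q x)) ∂Ppi
        = ∫⁻ x in S ∩ T, (1 - ∫⁻ y, α x y ∂(Q x)) ∂Ppi := by
    intro S T hS hT
    have hpt : ∀ x : E, T.indicator (fun _ => (1:ℝ≥0∞)) x * (1 - ∫⁻ y, α x y ∂(Q x))
        = T.indicator (fun x => 1 - ∫⁻ y, α x y ∂(Q x)) x := by
      intro x; by_cases hx : x ∈ T <;> simp [hx]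
    simp_rw [hpt]
    rw [lintegral_indicator hT, Measure.restrict_restrict hT, Set.inter_comm]
  -- put everything together
  rw [hPdef]
  simp only
  have hsplit : ∀ (S T : Set E), MeasurableSet T →
      ∫⁻ x in S, (T.indicator (fun _ => (1:ℝ≥0∞)) x * (1 - ∫⁻ y, α x y ∂(Q x))
          + ∫⁻ y in T, α x y ∂(Q x)) ∂Ppi
        = ∫⁻ x in S, T.indicator (fun _ => (1:ℝ≥0∞)) x * (1 - ∫⁻ y, α x y ∂(Q x)) ∂Ppi
          + ∫⁻ x in S, ∫⁻ y in T, α x y ∂(Q x) ∂Ppi := by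
    intro S T hT
    exact lintegral_add_left
      ((measurable_const.indicator hT).mul (measurable_const.sub hr_meas)) _
  rw [hsplit A B hB, hsplit B A hA, hD1 A B hA hB, hD1 B A hB hA,
    hTterm A B hA hB, hTterm B A hB hA, hTsymm, Set.inter_comm]
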